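/- For all n ≥ 1 and 0 ≤ k ≤ n-1, the number of k-left obstructed (n,n)-parking functions is |LPF(n, n+k; k)| = (k+1)(k+n+1)^{n-1}. -/

import Mathlib

/-- The first unoccupied spot `s` with `p ≤ s ≤ n`, if any. -/
def forwardSpot (n : ℕ) (occ : Finset ℕ) (p : ℕ) : Option ℕ :=
  (List.range' p (n + 1 - p)).find? (fun s => decide (s ∉ occ))

/-- Classical (forward-only) parking process: cars park one by one, each at the
first free spot `≥` its preference; returns the final occupied set if all park. -/
def classicalPark (n : ℕ) : List ℕ → Finset ℕ → Option (Finset ℕ)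
  | [], occ => some occ
  | p :: rest, occ =>
    match forwardSpot n occ p with
    | none => none
    | some s => classicalPark n rest (insert s occ)

/-- Backward candidates `p-1, p-2, …, p-k` that are at least `1`. -/
def backwardCandidates (k p : ℕ) : List ℕ :=
  ((List.range k).map (fun i => p - (i + 1))).filter (fun s => decide (1 ≤ s))

/-- The spot where a car with preference `p` parks under the `k`-Naples rule. -/
def naplesSpot (n k : ℕ) (occ : Finset ℕ) (p : ℕ) : Option ℕ :=
  if p ∈ occ then
    match (backwardCandidates k p).find? (fun s => decide (s ∉ occ)) with
    | some s => some s
    | none => forwardSpot n occ p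
  else some p

/-- `k`-Naples parking process; returns the final occupied set if all cars park. -/
def naplesPark (n k : ℕ) : List ℕ → Finset ℕ → Option (Finset ℕ)
  | [], occ => some occ
  | p :: rest, occ =>
    match naplesSpot n k occ p with
    | none => none
    | some s => naplesPark n k rest (insert s occ)

/-- All cars park under the `k`-Naples rule and no car with preference `p ≤ k`
finds all of `1, …, p` occupied (no car exits the lot searching backward). -/
def naplesContainedAux (n k : ℕ) : List ℕ → Finset ℕ → Bool
  | [], _ => true
  | p :: rest, occ =>
    (decide (p ≤ k → ¬ Finset.Icc 1 p ⊆ occ)) &&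
    match naplesSpot n k occ p with
    | none => false
    | some s => naplesContainedAux n k rest (insert s occ)

/-- The (1-based) preference list of `a : Fin m → Fin n`. -/
def prefList {m n : ℕ} (a : Fin m → Fin n) : List ℕ :=
  (List.ofFn a).map (fun x => (x : ℕ) + 1)

/-- The set of classical `(m,n)`-parking functions. -/
def PFset (m n : ℕ) : Finset (Fin m → Fin n) :=
  Finset.univ.filter (fun a => (classicalPark n (prefList a) ∅).isSome)

/-- The set of `k`-Naples `(m,n)`-parking functions. -/
def NPFset (m n k : ℕ) : Finset (Fin m → Fin n) :=
  Finset.univ.filter (fun a => (naplesPark n k (prefList a) ∅).isSome)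

/-- The set of contained `k`-Naples `(m,n)`-parking functions. -/
def Bset (m n k : ℕ) : Finset (Fin m → Fin n) :=
  Finset.univ.filter (fun a => naplesContainedAux n k (prefList a) ∅)

/-- The set of `k`-left obstructed `(m,n)`-parking functions: `m` cars on
`n + k` spots whose first `k` spots are obstructed, forward-only rule. -/
def LPFset (m n k : ℕ) : Finset (Fin m → Fin (n + k)) :=
  Finset.univ.filter (fun a => (classicalPark (n + k) (prefList a) (Finset.Icc 1 k)).isSome)
/- ===================== auxiliary development ===================== -/

section ForwardSpotSpec

lemma forwardSpot_none {n : ℕ} {occ : Finset ℕ} {p : ℕ} (h : forwardSpot n occ p = none) :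
    ∀ s, p ≤ s → s ≤ n → s ∈ occ := by
  intro s hps hsn
  have := List.find?_eq_none.mp h s (List.mem_range'_1.mpr ⟨hps, by omega⟩)
  simpa using this

lemma forwardSpot_some {n : ℕ} {occ : Finset ℕ} {p : ℕ} {s₀ : ℕ}
    (h : forwardSpot n occ p = some s₀) :
    p ≤ s₀ ∧ s₀ ≤ n ∧ s₀ ∉ occ ∧ ∀ s, p ≤ s → s < s₀ → s ∈ occ := by
  obtain ⟨hp0, as, bs, heq, hall⟩ := List.find?_eq_some_iff_append.mp h
  have hmem : s₀ ∈ List.range' p (n + 1 - p) := by rw [heq]; simp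
  obtain ⟨hps₀, hs₀⟩ := List.mem_range'_1.mp hmem
  have hnocc : s₀ ∉ occ := by simpa using hp0
  refine ⟨hps₀, by omega, hnocc, ?_⟩
  intro s hps hss
  have hlen : as.length < (List.range' p (n+1-p)).length := by
    rw [heq]; simp
  have hs₀eq : s₀ = p + as.length := by
    have h1 : (List.range' p (n+1-p))[as.length]'hlen = p + as.length := by simp
    have h2 := List.getElem_of_eq heq hlen
    rw [h1] at h2
    rw [List.getElem_append_right (le_refl _)] at h2
    have h2' : p + as.length = s₀ := by simpa using h2
    omega
  have hi : s - p < as.length := by omega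
  have hilen : s - p < (List.range' p (n+1-p)).length := by
    simp at hlen ⊢; omega
  have h2 : (List.range' p (n+1-p))[s-p]'hilen = s := by simp; omega
  have h3 : s ∈ as := by
    have h4 := List.getElem_of_eq heq hilen
    rw [h2, List.getElem_append_left hi] at h4
    rw [h4]; exact List.getElem_mem _
  have := hall s h3
  simpa using this

end ForwardSpotSpec

lemma park_iff (N : ℕ) (l : List ℕ) : ∀ (occ : Finset ℕ),
    (∀ p ∈ l, 1 ≤ p ∧ p ≤ N) →
    ((classicalPark N l occ).isSome ↔
      ∀ s, 1 ≤ s → s ≤ N →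
        (occ ∩ Finset.Icc s N).card + l.countP (fun p => decide (s ≤ p)) ≤ N + 1 - s) := by
  induction l with
  | nil =>
    intro occ _
    simp only [classicalPark, Option.isSome_some, List.countP_nil, true_iff]
    intro s h1 hs
    have : (occ ∩ Finset.Icc s N).card ≤ (Finset.Icc s N).card :=
      Finset.card_le_card Finset.inter_subset_right
    rw [Nat.card_Icc] at this; omega
  | cons p rest ih =>
    intro occ hl
    obtain ⟨hp1, hpN⟩ := hl p (by simp)
    have hrest : ∀ q ∈ rest, 1 ≤ q ∧ q ≤ N := fun q hq => hl q (by simp [hq])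
    rw [classicalPark]
    cases h : forwardSpot N occ p with
    | none =>
      simp only [Option.isSome_none, Bool.false_eq_true, false_iff]
      intro H
      have hsub : Finset.Icc p N ⊆ occ := by
        intro x hx; rw [Finset.mem_Icc] at hx; exact forwardSpot_none h x hx.1 hx.2
      have hcard : (occ ∩ Finset.Icc p N).card = N + 1 - p := by
        rw [Finset.inter_eq_right.mpr hsub, Nat.card_Icc]
      have := H p hp1 hpN
      rw [List.countP_cons, hcard] at this
      simp at this
    | some s₀ =>
      obtain ⟨hps₀, hs₀N, hs₀occ, hocc⟩ := forwardSpot_some h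
      rw [ih (insert s₀ occ) hrest]
      have hcardins : ∀ s, s ≤ N → ((insert s₀ occ) ∩ Finset.Icc s N).card =
          (occ ∩ Finset.Icc s N).card + (if s ≤ s₀ then 1 else 0) := by
        intro s hsN
        by_cases hss : s ≤ s₀
        · rw [Finset.insert_inter_of_mem (Finset.mem_Icc.mpr ⟨hss, hs₀N⟩),
            Finset.card_insert_of_notMem (fun hc => hs₀occ (Finset.mem_inter.mp hc).1)]
          simp [hss]
        · rw [Finset.insert_inter_of_notMem (fun hc => hss (Finset.mem_Icc.mp hc).1)]
          simp [hss]
      have key : ∀ s, p < s → s ≤ s₀ →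
          (occ ∩ Finset.Icc s N).card + (s - p) ≤ (occ ∩ Finset.Icc p N).card := by
        intro s hps hss
        have hsub : Finset.Icc p (s-1) ∪ (occ ∩ Finset.Icc s N) ⊆ occ ∩ Finset.Icc p N := by
          intro x hx
          simp only [Finset.mem_union, Finset.mem_inter, Finset.mem_Icc] at hx ⊢
          rcases hx with ⟨h1, h2⟩ | ⟨h1, h2, h3⟩
          · exact ⟨hocc x h1 (by omega), h1, by omega⟩
          · exact ⟨h1, by omega, h3⟩
        have hdisj : Disjoint (Finset.Icc p (s-1)) (occ ∩ Finset.Icc s N) := by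
          rw [Finset.disjoint_left]
          intro x hx hx2
          rw [Finset.mem_Icc] at hx
          have := (Finset.mem_Icc.mp (Finset.mem_inter.mp hx2).2).1
          omega
        have hc := Finset.card_le_card hsub
        rw [Finset.card_union_of_disjoint hdisj, Nat.card_Icc] at hc
        omega
      constructor
      · intro H s h1 hsN
        have := H s h1 hsN
        rw [hcardins s hsN] at this
        rw [List.countP_cons]
        by_cases hsp : s ≤ p
        · simp [hsp, (by omega : s ≤ s₀)] at this ⊢; omega
        · simp [hsp] at this ⊢
          by_cases hss : s ≤ s₀ <;> simp [hss] at this <;> omega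
      · intro H s h1 hsN
        rw [hcardins s hsN]
        by_cases hsp : s ≤ p
        · have := H s h1 hsN
          rw [List.countP_cons] at this
          simp [hsp, (by omega : s ≤ s₀)] at this ⊢
          omega
        · by_cases hss : s ≤ s₀
          · have hHp := H p hp1 hpN
            rw [List.countP_cons] at hHp
            simp at hHp
            have hk := key s (by omega) hss
            have hmono : rest.countP (fun q => decide (s ≤ q)) ≤
                rest.countP (fun q => decide (p ≤ q)) := by
              apply List.countP_mono_left
              intro x _ hx
              simp at hx ⊢; omega
            simp [hss]
            omega
          · have := H s h1 hsN
            rw [List.countP_cons] at this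
            simp [hsp, hss] at this ⊢
            omega

/- ===================== modular arithmetic helpers ===================== -/

lemma mod_flip {m t x d : ℕ} (hx : x < m) (hd : d < m) :
    (t + m - x) % m = d ↔ x = (t + m - d) % m := by
  constructor
  · intro h
    have hdm := Nat.div_add_mod (t + m - x) m
    rw [h] at hdm
    set q := (t + m - x) / m with hq
    have h2 : t + m - d = m * q + x := by omega
    rw [h2, Nat.mul_add_mod, Nat.mod_eq_of_lt hx]
  · intro h
    have hdm := Nat.div_add_mod (t + m - d) m
    rw [← h] at hdm
    set q := (t + m - d) / m with hq
    have h2 : t + m - x = m * q + d := by omega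
    rw [h2, Nat.mul_add_mod, Nat.mod_eq_of_lt hd]

lemma mod_shift {m t x : ℕ} (hm : 0 < m) (hx : x < m) :
    ((t + 1) % m + m - (x + 1) % m) % m = (t + m - x) % m := by
  have hxm : (x + 1) % m < m := Nat.mod_lt _ hm
  have htm : (t + 1) % m < m := Nat.mod_lt _ hm
  set A := (t + 1) % m + m - (x + 1) % m with hA
  set B := t + m - x with hB
  have key : A + (x + 1) ≡ B + (x + 1) [MOD m] := by
    have e1 : A + (x + 1) ≡ A + (x + 1) % m [MOD m] :=
      Nat.ModEq.add_left _ (Nat.mod_modEq _ _).symm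
    have e2 : A + (x + 1) % m = (t + 1) % m + m := by omega
    have e3 : (t + 1) % m + m ≡ (t + 1) + m [MOD m] :=
      Nat.ModEq.add_right _ (Nat.mod_modEq _ _)
    have e4 : B + (x + 1) = (t + 1) + m := by omega
    calc A + (x + 1) ≡ A + (x + 1) % m [MOD m] := e1
      _ = (t + 1) % m + m := e2
      _ ≡ (t + 1) + m [MOD m] := e3
      _ = B + (x + 1) := e4.symm
  exact Nat.ModEq.add_right_cancel' _ key

/- ===================== the circular condition ===================== -/

def Good (n m t : ℕ) (c : Fin n → Fin m) : Prop :=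
  ∀ j ∈ Finset.Icc 1 m,
    (Finset.univ.filter (fun i => (t + m - (c i : ℕ)) % m < j)).card ≤ j - 1

instance GoodDec (n m t : ℕ) (c : Fin n → Fin m) : Decidable (Good n m t c) := by
  unfold Good; infer_instance

lemma arc_card {n m : ℕ} (hm : 0 < m) (c : Fin n → Fin m) (t j : ℕ) (hj : j ≤ m) :
    (Finset.univ.filter (fun i => (t + m - (c i : ℕ)) % m < j)).card =
      ∑ d ∈ Finset.range j,
        (Finset.univ.filter (fun i => (c i : ℕ) = (t + m - d) % m)).card := by
  rw [Finset.card_eq_sum_card_fiberwise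
    (f := fun i => (t + m - (c i : ℕ)) % m) (t := Finset.range j)
    (fun i hi => Finset.mem_range.mpr (by simpa using hi))]
  apply Finset.sum_congr rfl
  intro d hd
  have hdj : d < j := Finset.mem_range.mp hd
  congr 1
  ext i
  simp only [Finset.mem_filter, Finset.mem_univ, true_and]
  constructor
  · rintro ⟨h1, h2⟩
    exact (mod_flip (c i).isLt (by omega)).mp h2
  · intro h
    have := (mod_flip (c i).isLt (by omega)).mpr h
    exact ⟨this ▸ (by omega), this⟩

/- ===================== record counting for walks ===================== -/

section Records
variable (W : ℕ → ℤ) (m n : ℕ)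

noncomputable def Mx (x : ℕ) : ℤ := (Finset.range (x+1)).sup' ⟨0, by simp⟩ W

lemma Mx_succ (x : ℕ) : Mx W (x+1) = max (W (x+1)) (Mx W x) := by
  simp [Mx, Finset.range_add_one (n := x+1), Finset.sup'_insert]

lemma le_Mx {u x : ℕ} (h : u ≤ x) : W u ≤ Mx W x :=
  Finset.le_sup' _ (Finset.mem_range.mpr (by omega))

lemma Mx_attained (x : ℕ) : ∃ u ≤ x, Mx W x = W u := by
  obtain ⟨b, hb, he⟩ := Finset.exists_mem_eq_sup' (⟨0, by simp⟩ : (Finset.range (x+1)).Nonempty) W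
  exact ⟨b, by simpa [Nat.lt_succ_iff] using hb, he⟩

variable (hnm : n < m) (Hper : ∀ x, W (x + m) = W x + ((m : ℤ) - n))
  (Hstep : ∀ x, W (x + 1) ≤ W x + 1)

def Rec (T : ℕ) : Prop := ∀ u ≤ T, W u < W (T + 1)

include Hstep in
lemma rec_iff_Mstep (T : ℕ) : Rec W T ↔ Mx W (T+1) = Mx W T + 1 := by
  constructor
  · intro h
    obtain ⟨u, hu, he⟩ := Mx_attained W T
    have h1 : Mx W T < W (T+1) := by rw [he]; exact h u hu
    have h2 : W (T+1) ≤ W T + 1 := Hstep T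
    have h3 : W T ≤ Mx W T := le_Mx W le_rfl
    rw [Mx_succ]
    omega
  · intro h u hu
    have h3 : W u ≤ Mx W T := le_Mx W hu
    rw [Mx_succ] at h
    have : W (T+1) ≤ Mx W (T+1) := le_Mx W le_rfl
    omega

lemma Mx_not_rec (T : ℕ) (h : ¬ Rec W T) : Mx W (T+1) = Mx W T := by
  unfold Rec at h
  push_neg at h
  obtain ⟨u, hu, hW⟩ := h
  rw [Mx_succ]
  have h2 : W (T+1) ≤ Mx W T := le_trans hW (le_Mx W hu)
  omega

include Hper in
lemma Mx_shift : ∀ x, Mx W (m + x) = max (Mx W m) (((m:ℤ) - n) + Mx W x) := by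
  intro x
  induction x with
  | zero =>
    have h1 : W m = W 0 + ((m:ℤ) - n) := by simpa using Hper 0
    have h2 : W m ≤ Mx W m := le_Mx W le_rfl
    have h0 : Mx W 0 = W 0 := by unfold Mx; simp
    rw [Nat.add_zero, h0, max_eq_left (by omega)]
  | succ x ih =>
    have : m + (x+1) = (m+x) + 1 := by omega
    rw [this, Mx_succ, ih, Mx_succ]
    have h1 : W (m + x + 1) = W (x+1) + ((m:ℤ) - n) := by
      have := Hper (x+1); rw [← this]; ring_nf
    rw [h1]
    rcases le_total (W (x+1)) (Mx W x) with h | h <;>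
      rcases le_total (Mx W m) (((m:ℤ)-n) + Mx W x) with h2 | h2 <;>
      simp [max_def] <;> omega

include Hper hnm in
lemma Mx_double : Mx W (m + m) = Mx W m + ((m:ℤ) - n) := by
  rw [Mx_shift W m n Hper m]
  have hd : (0:ℤ) ≤ (m:ℤ) - n := by omega
  have := le_Mx (W := W) (u := m) (x := m) le_rfl
  omega

lemma Mx_telescope : ∀ X, ∑ x ∈ Finset.range X, (Mx W (m + x + 1) - Mx W (m + x))
    = Mx W (m + X) - Mx W m := by
  intro X
  induction X with
  | zero => simp
  | succ X ih => rw [Finset.sum_range_succ, ih]; ring_nf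

include hnm Hper Hstep in
lemma record_count [DecidablePred (Rec W)] :
    ((Finset.range m).filter (fun t => Rec W (t + m))).card = m - n := by
  have key : ∀ x, (if Rec W (x + m) then (1:ℤ) else 0) = Mx W (m + x + 1) - Mx W (m + x) := by
    intro x
    by_cases h : Rec W (x + m)
    · rw [if_pos h]
      have := (rec_iff_Mstep W Hstep (x+m)).mp h
      rw [show m + x = x + m by omega] at *
      omega
    · rw [if_neg h]
      have := Mx_not_rec W (x+m) h
      rw [show m + x = x + m by omega] at *
      omega
  have hsum : ∑ x ∈ Finset.range m, (if Rec W (x + m) then (1:ℤ) else 0) = (m:ℤ) - n := by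
    rw [Finset.sum_congr rfl (fun x _ => key x), Mx_telescope, Mx_double W m n hnm Hper]
    ring
  rw [Finset.sum_boole] at hsum
  omega

end Records

/- ===================== the walk of a preference function ===================== -/

section Walk
variable {n m : ℕ} (c : Fin n → Fin m)

def gfn (x : ℕ) : ℕ := (Finset.univ.filter (fun i => (c i : ℕ) = x % m)).card
def Vfn (x : ℕ) : ℕ := ∑ y ∈ Finset.range x, gfn c y
def Wfn (x : ℕ) : ℤ := (x : ℤ) - Vfn c x

lemma gfn_period (x : ℕ) : gfn c (x + m) = gfn c x := by
  unfold gfn; rw [Nat.add_mod_right]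

lemma Vfn_m (hm : 0 < m) : Vfn c m = n := by
  unfold Vfn
  have := Finset.card_eq_sum_card_fiberwise (s := (Finset.univ : Finset (Fin n)))
    (t := Finset.range m) (f := fun i => (c i : ℕ))
    (fun i _ => Finset.mem_range.mpr (c i).isLt)
  rw [Finset.card_univ, Fintype.card_fin] at this
  conv_rhs => rw [this]
  apply Finset.sum_congr rfl
  intro y hy
  unfold gfn
  rw [Nat.mod_eq_of_lt (Finset.mem_range.mp hy)]

lemma window_sum (hm : 0 < m) : ∀ x, ∑ y ∈ Finset.range m, gfn c (x + y) = n := by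
  intro x
  induction x with
  | zero => simpa [Vfn] using Vfn_m c hm
  | succ x ih =>
    have h1 : ∑ y ∈ Finset.range (m+1), gfn c (x + y)
        = (∑ y ∈ Finset.range m, gfn c (x + y)) + gfn c (x + m) := Finset.sum_range_succ _ m
    have h2 : ∑ y ∈ Finset.range (m+1), gfn c (x + y)
        = (∑ y ∈ Finset.range m, gfn c (x + (y+1))) + gfn c (x + 0) := Finset.sum_range_succ' _ m
    have h3 : ∑ y ∈ Finset.range m, gfn c (x + (y+1)) = ∑ y ∈ Finset.range m, gfn c (x + 1 + y) := by
      apply Finset.sum_congr rfl; intro y _; congr 1; omega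
    rw [gfn_period] at h1
    simp only [Nat.add_zero] at h2
    omega

lemma Vfn_period (hm : 0 < m) (x : ℕ) : Vfn c (x + m) = Vfn c x + n := by
  unfold Vfn
  rw [← Finset.sum_range_add_sum_Ico _ (by omega : x ≤ x + m),
    Finset.sum_Ico_eq_sum_range]
  simp only [Nat.add_sub_cancel_left]
  rw [window_sum c hm x]

lemma Wfn_period (hm : 0 < m) (x : ℕ) : Wfn c (x + m) = Wfn c x + ((m:ℤ) - n) := by
  unfold Wfn
  rw [Vfn_period c hm x]
  push_cast
  ring

lemma Wfn_step (x : ℕ) : Wfn c (x + 1) ≤ Wfn c x + 1 := by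
  unfold Wfn Vfn
  rw [Finset.sum_range_succ]
  push_cast
  omega

lemma Wfn_qperiod (hm : 0 < m) (hnm : n < m) (x : ℕ) : ∀ q, Wfn c x ≤ Wfn c (x + q * m) := by
  intro q
  induction q with
  | zero => simp
  | succ q ih =>
    have : x + (q+1) * m = (x + q * m) + m := by ring
    rw [this, Wfn_period c hm]
    have : (0:ℤ) ≤ (m:ℤ) - n := by omega
    omega

lemma arcsum_eq (hm : 0 < m) (t j : ℕ) (hj1 : 1 ≤ j) (hjm : j ≤ m) :
    ∑ d ∈ Finset.range j, gfn c (t + m - d) = Vfn c (t + m + 1) - Vfn c (t + m + 1 - j) := by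
  have hrefl : ∑ d ∈ Finset.range j, gfn c (t + m - d)
      = ∑ i ∈ Finset.range j, gfn c (t + m + 1 - j + i) := by
    rw [← Finset.sum_range_reflect (fun i => gfn c (t + m + 1 - j + i)) j]
    apply Finset.sum_congr rfl
    intro d hd
    have hdj : d < j := Finset.mem_range.mp hd
    congr 1
    omega
  have hico : ∑ i ∈ Finset.range j, gfn c (t + m + 1 - j + i)
      = ∑ y ∈ Finset.Ico (t + m + 1 - j) (t + m + 1), gfn c y := by
    rw [Finset.sum_Ico_eq_sum_range]
    have hjj : t + m + 1 - (t + m + 1 - j) = j := by omega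
    rw [hjj]
  have hsplit := Finset.sum_range_add_sum_Ico (gfn c) (by omega : t + m + 1 - j ≤ t + m + 1)
  unfold Vfn
  omega

lemma good_iff_rec (hm : 0 < m) (hnm : n < m) (t : ℕ) :
    Good n m t c ↔ Rec (Wfn c) (t + m) := by
  have harc : ∀ j, 1 ≤ j → j ≤ m →
      ((Finset.univ.filter (fun i => (t + m - (c i : ℕ)) % m < j)).card =
        Vfn c (t + m + 1) - Vfn c (t + m + 1 - j)) := by
    intro j h1 h2
    rw [arc_card hm c t j h2, ← arcsum_eq c hm t j h1 h2]
    rfl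
  have hVle : ∀ j, 1 ≤ j → j ≤ m → Vfn c (t + m + 1 - j) ≤ Vfn c (t + m + 1) := by
    intro j _ _
    apply Finset.sum_le_sum_of_subset
    apply Finset.range_subset_range.mpr
    omega
  constructor
  · intro hG u hu
    obtain ⟨q, r, hrm, hver⟩ : ∃ q r, r < m ∧ t + m - u = q * m + r := by
      refine ⟨(t + m - u) / m, (t + m - u) % m, Nat.mod_lt _ hm, ?_⟩
      rw [Nat.mul_comm]
      exact (Nat.div_add_mod _ _).symm
    have hGj := hG (r+1) (Finset.mem_Icc.mpr ⟨by omega, by omega⟩)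
    rw [harc (r+1) (by omega) (by omega)] at hGj
    have hq2 : u + q * m = t + m + 1 - (r + 1) := by omega
    have hWq := Wfn_qperiod c hm hnm u q
    rw [hq2] at hWq
    have hVle2 := hVle (r+1) (by omega) (by omega)
    unfold Wfn at hWq ⊢
    have hc1 : ((t + m + 1 - (r+1) : ℕ) : ℤ) = (t:ℤ) + m + 1 - (r+1) := by omega
    omega
  · intro hR j hj
    rw [Finset.mem_Icc] at hj
    rw [harc j hj.1 hj.2]
    have hu : t + m + 1 - j ≤ t + m := by omega
    have := hR _ hu
    unfold Wfn at this
    have hVle2 := hVle j hj.1 hj.2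
    have hc1 : ((t + m + 1 - j : ℕ) : ℤ) = (t:ℤ) + m + 1 - j := by omega
    omega

lemma cycle_card (hm : 0 < m) (hnm : n < m) :
    ((Finset.range m).filter (fun t => Good n m t c)).card = m - n := by
  classical
  have := record_count (Wfn c) m n hnm (Wfn_period c hm) (Wfn_step c)
  rw [← this]
  congr 1
  apply Finset.filter_congr
  intro t _
  exact (good_iff_rec c hm hnm t)

end Walk

/- ===================== rotation invariance and double counting ===================== -/

section Rot
variable {n M : ℕ}

def upF (c : Fin n → Fin (M+1)) : Fin n → Fin (M+1) :=
  fun i => ⟨((c i : ℕ) + 1) % (M+1), Nat.mod_lt _ (Nat.succ_pos M)⟩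
def downF (c : Fin n → Fin (M+1)) : Fin n → Fin (M+1) :=
  fun i => ⟨((c i : ℕ) + M) % (M+1), Nat.mod_lt _ (Nat.succ_pos M)⟩

lemma downF_upF (c : Fin n → Fin (M+1)) : downF (upF c) = c := by
  funext i
  apply Fin.ext
  show (((c i : ℕ) + 1) % (M+1) + M) % (M+1) = (c i : ℕ)
  rw [Nat.mod_add_mod, show (c i : ℕ) + 1 + M = (c i : ℕ) + (M+1) by omega,
    Nat.add_mod_right, Nat.mod_eq_of_lt (c i).isLt]

lemma upF_downF (c : Fin n → Fin (M+1)) : upF (downF c) = c := by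
  funext i
  apply Fin.ext
  show (((c i : ℕ) + M) % (M+1) + 1) % (M+1) = (c i : ℕ)
  rw [Nat.mod_add_mod, show (c i : ℕ) + M + 1 = (c i : ℕ) + (M+1) by omega,
    Nat.add_mod_right, Nat.mod_eq_of_lt (c i).isLt]

lemma good_shift (t : ℕ) (c : Fin n → Fin (M+1)) :
    Good n (M+1) t c ↔ Good n (M+1) ((t+1) % (M+1)) (upF c) := by
  unfold Good
  apply forall₂_congr
  intro j _
  have : (Finset.univ.filter (fun i => (t + (M+1) - (c i : ℕ)) % (M+1) < j)) =
      (Finset.univ.filter (fun i => ((t+1) % (M+1) + (M+1) - ((upF c) i : ℕ)) % (M+1) < j)) := by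
    apply Finset.filter_congr
    intro i _
    show _ ↔ _
    have : ((upF c) i : ℕ) = ((c i : ℕ) + 1) % (M+1) := rfl
    rw [this, mod_shift (Nat.succ_pos M) (c i).isLt]
  rw [this]

lemma card_good_shift (t : ℕ) :
    (Finset.univ.filter (fun c : Fin n → Fin (M+1) => Good n (M+1) ((t+1) % (M+1)) c)).card =
    (Finset.univ.filter (fun c : Fin n → Fin (M+1) => Good n (M+1) t c)).card := by
  apply Finset.card_bij' (fun c _ => downF c) (fun c _ => upF c)
  · intro c hc
    simp only [Finset.mem_filter, Finset.mem_univ, true_and] at hc ⊢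
    rw [good_shift t (downF c), upF_downF]
    exact hc
  · intro c hc
    simp only [Finset.mem_filter, Finset.mem_univ, true_and] at hc ⊢
    exact (good_shift t c).mp hc
  · intro c _; exact upF_downF c
  · intro c _; exact downF_upF c

lemma card_good_all (t : ℕ) (ht : t < M + 1) :
    (Finset.univ.filter (fun c : Fin n → Fin (M+1) => Good n (M+1) t c)).card =
    (Finset.univ.filter (fun c : Fin n → Fin (M+1) => Good n (M+1) 0 c)).card := by
  induction t with
  | zero => rfl
  | succ t ih =>
    have h1 : (t + 1) % (M+1) = t + 1 := Nat.mod_eq_of_lt ht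
    rw [← h1, card_good_shift t, ih (by omega)]

lemma count_good_zero (hn : 0 < n) (hnm : n < M + 1) :
    (Finset.univ.filter (fun c : Fin n → Fin (M+1) => Good n (M+1) 0 c)).card
      = (M + 1 - n) * (M+1) ^ (n-1) := by
  classical
  set m := M + 1 with hm
  have swap : ∑ t ∈ Finset.range m,
        (Finset.univ.filter (fun c : Fin n → Fin m => Good n m t c)).card
      = ∑ c ∈ (Finset.univ : Finset (Fin n → Fin m)),
        ((Finset.range m).filter (fun t => Good n m t c)).card := by
    simp only [Finset.card_filter]
    rw [Finset.sum_comm]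
  have lhs : ∑ t ∈ Finset.range m,
        (Finset.univ.filter (fun c : Fin n → Fin m => Good n m t c)).card
      = m * (Finset.univ.filter (fun c : Fin n → Fin m => Good n m 0 c)).card := by
    rw [Finset.sum_congr rfl (fun t ht => card_good_all t (Finset.mem_range.mp ht))]
    rw [Finset.sum_const, Finset.card_range, smul_eq_mul]
  have rhs : ∑ c ∈ (Finset.univ : Finset (Fin n → Fin m)),
        ((Finset.range m).filter (fun t => Good n m t c)).card
      = (m - n) * m ^ n := by
    rw [Finset.sum_congr rfl (fun c _ => cycle_card c (by omega) hnm)]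
    rw [Finset.sum_const, Finset.card_univ, smul_eq_mul]
    rw [Fintype.card_fun, Fintype.card_fin, Fintype.card_fin, Nat.mul_comm]
  have key : m * (Finset.univ.filter (fun c : Fin n → Fin m => Good n m 0 c)).card
      = (m - n) * m ^ n := by rw [← lhs, swap, rhs]
  have hpow : m ^ n = m * m ^ (n - 1) := by
    conv_lhs => rw [show n = 1 + (n-1) by omega]
    rw [pow_add, pow_one]
  rw [hpow, show (m-n) * (m * m ^ (n-1)) = m * ((m-n) * m^(n-1)) by ring] at key
  exact Nat.eq_of_mul_eq_mul_left (by omega) key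

end Rot

/- ===================== assembling ===================== -/

section Assemble
variable {n k : ℕ}

lemma flatMap_single {α β : Type*} (f : α → β) (l : List α) :
    (l.flatMap fun a => [f a]) = l.map f := by
  induction l with
  | nil => rfl
  | cons x xs ih => simp [List.flatMap_cons, ih]

lemma prefList_eq {m n : ℕ} (a : Fin m → Fin n) :
    prefList a = (List.ofFn a).map (fun x => x.val + 1) := by
  show List.map (fun x => x + 1) ((List.ofFn a).flatMap fun (x : Fin n) => [(x : ℕ)]) = _
  rw [flatMap_single, List.map_map]
  rfl

lemma countP_ofFn {α : Type*} {q : α → Bool} : ∀ {n : ℕ} (g : Fin n → α),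
    (List.ofFn g).countP q = (Finset.univ.filter (fun i => q (g i))).card := by
  intro n
  induction n with
  | zero => intro g; simp
  | succ n ih =>
    intro g
    rw [List.ofFn_succ, List.countP_cons, ih, Finset.card_filter, Finset.card_filter,
      Fin.sum_univ_succ]
    simp [Function.comp]
    omega

def Lcond (n k : ℕ) (a : Fin n → Fin (n + k)) : Prop :=
  ∀ s ∈ Finset.Icc 1 (n + k + 1),
    (Finset.univ.filter (fun i => s ≤ (a i : ℕ) + 1)).card ≤ n + k + 1 - s

instance (n k : ℕ) (a : Fin n → Fin (n + k)) : Decidable (Lcond n k a) := by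
  unfold Lcond; infer_instance

lemma countP_prefList {N : ℕ} (a : Fin n → Fin N) (s : ℕ) :
    (prefList a).countP (fun p => decide (s ≤ p)) =
      (Finset.univ.filter (fun i => s ≤ (a i : ℕ) + 1)).card := by
  rw [prefList_eq, List.countP_map, countP_ofFn]
  apply congr_arg
  ext i
  simp

lemma Icc_inter_card (hn : 1 ≤ n) (s : ℕ) (h1 : 1 ≤ s) (h2 : s ≤ n + k) :
    (Finset.Icc 1 k ∩ Finset.Icc s (n + k)).card = k + 1 - s := by
  have : Finset.Icc 1 k ∩ Finset.Icc s (n + k) = Finset.Icc s k := by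
    ext x
    simp only [Finset.mem_inter, Finset.mem_Icc]
    omega
  rw [this, Nat.card_Icc]

lemma mem_LPF_iff (hn : 1 ≤ n) (a : Fin n → Fin (n + k)) :
    ((classicalPark (n + k) (prefList a) (Finset.Icc 1 k)).isSome = true) ↔ Lcond n k a := by
  have hvals : ∀ p ∈ prefList a, 1 ≤ p ∧ p ≤ n + k := by
    intro p hp
    rw [prefList_eq, List.mem_map] at hp
    obtain ⟨x, hx, rfl⟩ := hp
    exact ⟨by omega, by have := x.isLt; omega⟩
  rw [park_iff (n + k) (prefList a) (Finset.Icc 1 k) hvals]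
  have hcnt_le : ∀ s : ℕ, (Finset.univ.filter (fun i => s ≤ (a i : ℕ) + 1)).card ≤ n := by
    intro s
    calc (Finset.univ.filter (fun i => s ≤ (a i : ℕ) + 1)).card
        ≤ (Finset.univ : Finset (Fin n)).card := Finset.card_filter_le _ _
      _ = n := by rw [Finset.card_univ, Fintype.card_fin]
  have hcnt_top : (Finset.univ.filter (fun i => n + k + 1 ≤ (a i : ℕ) + 1)).card = 0 := by
    rw [Finset.card_eq_zero, Finset.filter_eq_empty_iff]
    intro i _
    have := (a i).isLt
    omega
  constructor
  · intro H s hs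
    rw [Finset.mem_Icc] at hs
    by_cases hsm : s = n + k + 1
    · subst hsm; rw [hcnt_top]; omega
    · have h2 : s ≤ n + k := by omega
      have := H s hs.1 h2
      rw [countP_prefList a s, Icc_inter_card hn s hs.1 h2] at this
      omega
  · intro H s h1 h2
    rw [countP_prefList a s, Icc_inter_card hn s h1 h2]
    have := H s (Finset.mem_Icc.mpr ⟨h1, by omega⟩)
    by_cases hsk : s ≤ k
    · have := hcnt_le s
      omega
    · omega

lemma good_iff_Lcond (hn : 1 ≤ n) (a : Fin n → Fin (n + k)) (c : Fin n → Fin ((n + k) + 1))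
    (hrel : ∀ i, (c i : ℕ) = (a i : ℕ) + 1) :
    Good n ((n + k) + 1) 0 c ↔ Lcond n k a := by
  have hm : (n + k) + 1 = n + k + 1 := rfl
  have hcnt_le : ∀ s : ℕ, (Finset.univ.filter (fun i => s ≤ (a i : ℕ) + 1)).card ≤ n := by
    intro s
    calc (Finset.univ.filter (fun i => s ≤ (a i : ℕ) + 1)).card
        ≤ (Finset.univ : Finset (Fin n)).card := Finset.card_filter_le _ _
      _ = n := by rw [Finset.card_univ, Fintype.card_fin]
  have hfe : ∀ j, 1 ≤ j → j ≤ n + k + 1 →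
      (Finset.univ.filter (fun i => (0 + ((n+k)+1) - (c i : ℕ)) % ((n+k)+1) < j)) =
      (Finset.univ.filter (fun i => n + k + 2 - j ≤ (a i : ℕ) + 1)) := by
    intro j hj1 hj2
    apply Finset.filter_congr
    intro i _
    have hlt := (a i).isLt
    have hr := hrel i
    have hmod : (0 + ((n+k)+1) - (c i : ℕ)) % ((n+k)+1) = n + k + 1 - ((a i : ℕ) + 1) := by
      rw [hr, Nat.zero_add, Nat.mod_eq_of_lt (by omega)]
    rw [hmod]
    constructor <;> intro <;> omega
  constructor
  · intro H s hs
    rw [Finset.mem_Icc] at hs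
    have hj : n + k + 2 - s ∈ Finset.Icc 1 ((n+k)+1) := Finset.mem_Icc.mpr ⟨by omega, by omega⟩
    have h2 := H _ hj
    rw [hfe (n+k+2-s) (by omega) (by omega)] at h2
    have hss : n + k + 2 - (n + k + 2 - s) = s := by omega
    rw [hss] at h2
    omega
  · intro H j hj
    rw [Finset.mem_Icc] at hj
    rw [hfe j hj.1 hj.2]
    have hs : n + k + 2 - j ∈ Finset.Icc 1 (n + k + 1) := Finset.mem_Icc.mpr ⟨by omega, by omega⟩
    have := H _ hs
    omega

lemma card_LPF_eq_good (hn : 1 ≤ n) :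
    (LPFset n n k).card =
      (Finset.univ.filter
        (fun c : Fin n → Fin ((n + k) + 1) => Good n ((n + k) + 1) 0 c)).card := by
  have hLPF : (LPFset n n k).card =
      (Finset.univ.filter (fun a : Fin n → Fin (n + k) => Lcond n k a)).card := by
    unfold LPFset
    congr 1
    apply Finset.filter_congr
    intro a _
    exact mem_LPF_iff hn a
  rw [hLPF]
  have hgood_pos : ∀ c : Fin n → Fin ((n+k)+1), Good n ((n+k)+1) 0 c → ∀ i, 1 ≤ (c i : ℕ) := by
    intro c hc i
    by_contra hci
    have hc0 : (c i : ℕ) = 0 := by omega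
    have h1 := hc 1 (Finset.mem_Icc.mpr ⟨le_refl _, by omega⟩)
    have hmem : i ∈ Finset.univ.filter (fun i => (0 + ((n+k)+1) - (c i : ℕ)) % ((n+k)+1) < 1) := by
      rw [Finset.mem_filter]
      refine ⟨Finset.mem_univ _, ?_⟩
      rw [hc0]
      simp
    have := Finset.card_pos.mpr ⟨i, hmem⟩
    omega
  apply Finset.card_bij'
    (i := fun (a : Fin n → Fin (n + k)) _ =>
      (fun i => (⟨(a i : ℕ) + 1, by have := (a i).isLt; omega⟩ : Fin ((n+k)+1))))
    (j := fun (c : Fin n → Fin ((n+k)+1)) _ =>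
      (fun i => (⟨(c i : ℕ) - 1, by have := (c i).isLt; omega⟩ : Fin (n + k))))
  · intro a _
    funext i
    apply Fin.ext
    simp
  · intro c hc
    simp only [Finset.mem_filter, Finset.mem_univ, true_and] at hc
    have hpos := hgood_pos c hc
    funext i
    apply Fin.ext
    have := hpos i
    simp
    omega
  · intro a ha
    simp only [Finset.mem_filter, Finset.mem_univ, true_and] at ha ⊢
    exact (good_iff_Lcond hn a _ (fun i => rfl)).mpr ha
  · intro c hc
    simp only [Finset.mem_filter, Finset.mem_univ, true_and] at hc ⊢
    have hpos := hgood_pos c hc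
    exact (good_iff_Lcond hn _ c (fun i => by have h1 := hpos i; simp; omega)).mp hc

end Assemble

theorem obstructed_count (n k : ℕ) (hn : 1 ≤ n) (hk : k ≤ n - 1) :
    (LPFset n n k).card = (k + 1) * (k + n + 1) ^ (n - 1) := by
  rw [card_LPF_eq_good hn, count_good_zero hn (by omega)]
  congr 1
  · omega
  · congr 1
    omega
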